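/- For 0 < q < p ≤ 1, natural number n, and x ∈ [0,1), the (p,q)-Meyer-König and Zeller operator applied to the constant function 1 equals 1: p^{-n(n+1)/2} Σ_{k=0}^{∞} [n+k choose k]_{p,q} x^k p^{-kn} ∏_{s=0}^{n}(p^s - q^s x) = 1. -/

import Mathlib

open Filter Topology

noncomputable def pqInt (p q : ℝ) (n : ℕ) : ℝ := (p ^ n - q ^ n) / (p - q)

noncomputable def pqFact (p q : ℝ) (n : ℕ) : ℝ :=
  ∏ j ∈ Finset.range n, pqInt p q (j + 1)

noncomputable def pqBinom (p q : ℝ) (n k : ℕ) : ℝ :=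
  pqFact p q n / (pqFact p q k * pqFact p q (n - k))

noncomputable def mkz (p q : ℝ) (n : ℕ) (f : ℝ → ℝ) (x : ℝ) : ℝ :=
  if x = 1 then f 1 else
    (p ^ (n * (n + 1) / 2))⁻¹ *
      ∑' k : ℕ, pqBinom p q (n + k) k * x ^ k * (p ^ (k * n))⁻¹ *
        (∏ s ∈ Finset.range (n + 1), (p ^ s - q ^ s * x)) *
        f (p ^ n * pqInt p q k / pqInt p q (n + k))

noncomputable def supNorm (g : ℝ → ℝ) : ℝ :=
  sSup ((fun x => |g x|) '' Set.Icc (0 : ℝ) 1)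

noncomputable def modCont (f : ℝ → ℝ) (δ : ℝ) : ℝ :=
  sSup ((fun p : ℝ × ℝ => |f p.1 - f p.2|) ''
    {p : ℝ × ℝ | p.1 ∈ Set.Icc (0 : ℝ) 1 ∧ p.2 ∈ Set.Icc (0 : ℝ) 1 ∧ |p.1 - p.2| ≤ δ})

def StatLim (x : ℕ → ℝ) (L : ℝ) : Prop :=
  ∀ ε > 0, Filter.Tendsto
    (fun n => (((Finset.range (n + 1)).filter (fun k => ε ≤ |x k - L|)).card : ℝ) / (n : ℝ))
    Filter.atTop (nhds 0)

section q
variable {t : ℝ} (ht0 : 0 < t) (ht1 : t < 1)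

lemma pqInt_geom (m : ℕ) (ht : t ≠ 1) : pqInt 1 t m = ∑ i ∈ Finset.range m, t ^ i := by
  rw [geom_sum_eq ht]
  unfold pqInt
  rw [one_pow, show (1:ℝ) - t ^ m = -(t ^ m - 1) by ring, show (1:ℝ) - t = -(t - 1) by ring,
    neg_div_neg_eq]

include ht0 ht1

lemma pqInt_pos (m : ℕ) : 0 < pqInt 1 t (m + 1) := by
  rw [pqInt_geom _ ht1.ne]
  apply Finset.sum_pos (fun i _ => pow_pos ht0 i)
  simp

lemma pqInt_le (m : ℕ) : pqInt 1 t m ≤ m := by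
  rw [pqInt_geom _ ht1.ne]
  calc ∑ i ∈ Finset.range m, t ^ i ≤ ∑ i ∈ Finset.range m, 1 := by
        apply Finset.sum_le_sum
        intro i _
        exact pow_le_one₀ ht0.le ht1.le
    _ = m := by simp

lemma one_le_pqInt (m : ℕ) : 1 ≤ pqInt 1 t (m + 1) := by
  rw [pqInt_geom _ ht1.ne]
  calc (1:ℝ) = t ^ 0 := by simp
    _ ≤ ∑ i ∈ Finset.range (m + 1), t ^ i := by
        apply Finset.single_le_sum (f := fun i => t ^ i) (fun i _ => (pow_pos ht0 i).le)
        simp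

lemma pqFact_pos (m : ℕ) : 0 < pqFact 1 t m := by
  apply Finset.prod_pos
  intro j _
  exact pqInt_pos ht0 ht1 j

omit ht0 ht1 in
lemma pqFact_succ (p q : ℝ) (m : ℕ) :
    pqFact p q (m + 1) = pqFact p q m * pqInt p q (m + 1) :=
  Finset.prod_range_succ _ _

lemma qBinom_pos (m k : ℕ) : 0 < pqBinom 1 t m k :=
  div_pos (pqFact_pos ht0 ht1 _) (mul_pos (pqFact_pos ht0 ht1 _) (pqFact_pos ht0 ht1 _))

lemma qBinom_zero (m : ℕ) : pqBinom 1 t m 0 = 1 := by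
  unfold pqBinom
  rw [Nat.sub_zero, show pqFact 1 t 0 = 1 from Finset.prod_range_zero _, one_mul,
    div_self (pqFact_pos ht0 ht1 m).ne']

lemma qBinom_self (m : ℕ) : pqBinom 1 t m m = 1 := by
  unfold pqBinom
  rw [Nat.sub_self, show pqFact 1 t 0 = 1 from Finset.prod_range_zero _, mul_one,
    div_self (pqFact_pos ht0 ht1 m).ne']

omit ht0 in
lemma pqInt_add (a b : ℕ) : pqInt 1 t (a + b) = pqInt 1 t a + t ^ a * pqInt 1 t b := by
  unfold pqInt
  have h : (1:ℝ) - t ≠ 0 := sub_ne_zero.2 (by linarith)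
  field_simp
  ring

lemma qBinom_succ (n k : ℕ) :
    pqBinom 1 t (n + (k + 1)) (k + 1) =
      pqBinom 1 t (n + k) k * (pqInt 1 t (n + k + 1) / pqInt 1 t (k + 1)) := by
  unfold pqBinom
  rw [show n + (k + 1) - (k + 1) = n by omega, Nat.add_sub_cancel,
    show n + (k + 1) = (n + k) + 1 from rfl, pqFact_succ, pqFact_succ]
  have h1 := (pqFact_pos ht0 ht1 (n + k)).ne'
  have h2 := (pqFact_pos ht0 ht1 k).ne'
  have h3 := (pqFact_pos ht0 ht1 n).ne'
  have h4 := (pqInt_pos ht0 ht1 k).ne'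
  have h5 := (pqInt_pos ht0 ht1 (n + k)).ne'
  field_simp

lemma qBinom_succ_left (n k : ℕ) :
    pqBinom 1 t ((n + 1) + k) k =
      pqBinom 1 t (n + k) k * (pqInt 1 t (n + k + 1) / pqInt 1 t (n + 1)) := by
  unfold pqBinom
  rw [show (n + 1) + k - k = n + 1 by omega, Nat.add_sub_cancel,
    show (n + 1) + k = (n + k) + 1 by omega, pqFact_succ, pqFact_succ]
  have h1 := (pqFact_pos ht0 ht1 (n + k)).ne'
  have h2 := (pqFact_pos ht0 ht1 k).ne'
  have h3 := (pqFact_pos ht0 ht1 n).ne'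
  have h4 := (pqInt_pos ht0 ht1 n).ne'
  have h5 := (pqInt_pos ht0 ht1 (n + k)).ne'
  field_simp

lemma qPascal (n k : ℕ) :
    pqBinom 1 t (n + k + 2) (k + 1) =
      pqBinom 1 t (n + k + 1) k + t ^ (k + 1) * pqBinom 1 t (n + k + 1) (k + 1) := by
  have e1 : pqBinom 1 t (n + k + 2) (k + 1) =
      pqBinom 1 t (n + k) k * (pqInt 1 t (n + k + 1) / pqInt 1 t (n + 1)) *
        (pqInt 1 t (n + k + 2) / pqInt 1 t (k + 1)) := by
    rw [show n + k + 2 = (n + 1) + (k + 1) by omega, qBinom_succ ht0 ht1,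
      qBinom_succ_left ht0 ht1]
    simp only [show n + 1 + (k + 1) = n + k + 2 from by omega,
      show n + 1 + k + 1 = n + k + 2 from by omega]
  have e2 : pqBinom 1 t (n + k + 1) k =
      pqBinom 1 t (n + k) k * (pqInt 1 t (n + k + 1) / pqInt 1 t (n + 1)) := by
    rw [show n + k + 1 = (n + 1) + k by omega, qBinom_succ_left ht0 ht1]
    simp only [show n + 1 + k = n + k + 1 from by omega]
  have e3 : pqBinom 1 t (n + k + 1) (k + 1) =
      pqBinom 1 t (n + k) k * (pqInt 1 t (n + k + 1) / pqInt 1 t (k + 1)) := by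
    rw [show n + k + 1 = n + (k + 1) by omega, qBinom_succ ht0 ht1]
    simp only [show n + (k + 1) = n + k + 1 from by omega]
  rw [e1, e2, e3]
  have key : pqInt 1 t (n + k + 2) = pqInt 1 t (k + 1) + t ^ (k + 1) * pqInt 1 t (n + 1) := by
    rw [show n + k + 2 = (k + 1) + (n + 1) by omega, pqInt_add ht1]
  rw [key]
  have h4 := (pqInt_pos ht0 ht1 k).ne'
  have h5 := (pqInt_pos ht0 ht1 n).ne'
  field_simp

lemma qBinom_summable (n : ℕ) {x : ℝ} (hx0 : 0 ≤ x) (hx1 : x < 1) :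
    Summable (fun k : ℕ => pqBinom 1 t (n + k) k * x ^ k) := by
  apply summable_of_ratio_norm_eventually_le (r := (1 + x) / 2) (by linarith)
  have hto : Tendsto (fun k : ℕ => (n : ℝ) * t ^ (k + 1)) atTop (nhds 0) := by
    have h1 : Tendsto (fun k : ℕ => t ^ k) atTop (nhds 0) :=
      tendsto_pow_atTop_nhds_zero_of_lt_one ht0.le ht1
    have h2 : Tendsto (fun k : ℕ => (n : ℝ) * t ^ k) atTop (nhds ((n : ℝ) * 0)) :=
      h1.const_mul _
    rw [mul_zero] at h2
    exact h2.comp (tendsto_add_atTop_nat 1)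
  have hev : ∀ᶠ k in atTop, (n : ℝ) * t ^ (k + 1) ≤ (1 - x) / 2 :=
    hto.eventually (eventually_le_nhds (by linarith))
  filter_upwards [hev] with k hk
  have hBpos := qBinom_pos ht0 ht1 (n + k) k
  have hxk : (0:ℝ) ≤ x ^ k := pow_nonneg hx0 k
  have hI1 := pqInt_pos ht0 ht1 k
  have hI2 := pqInt_pos ht0 ht1 (n + k)
  have hfk1 : pqBinom 1 t (n + (k + 1)) (k + 1) * x ^ (k + 1) =
      pqBinom 1 t (n + k) k * x ^ k * (x * (pqInt 1 t (n + k + 1) / pqInt 1 t (k + 1))) := by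
    rw [qBinom_succ ht0 ht1, pow_succ]
    ring
  have hrat : pqInt 1 t (n + k + 1) / pqInt 1 t (k + 1) ≤ 1 + n * t ^ (k + 1) := by
    rw [div_le_iff₀ hI1]
    have hid : pqInt 1 t (n + k + 1) = pqInt 1 t (k + 1) + t ^ (k + 1) * pqInt 1 t n := by
      rw [show n + k + 1 = (k + 1) + n by omega, pqInt_add ht1]
    rw [hid]
    have h1 : pqInt 1 t n ≤ n := pqInt_le ht0 ht1 n
    have h2 : (1:ℝ) ≤ pqInt 1 t (k + 1) := one_le_pqInt ht0 ht1 k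
    have h3 : (0:ℝ) < t ^ (k + 1) := pow_pos ht0 _
    have h4 : (0:ℝ) ≤ pqInt 1 t n := by
      cases n with
      | zero => simp [pqInt]
      | succ m => exact (pqInt_pos ht0 ht1 m).le
    nlinarith [mul_le_mul_of_nonneg_left h1 h3.le,
      mul_le_mul_of_nonneg_left h2 (mul_nonneg (Nat.cast_nonneg n) h3.le)]
  have hratpos : 0 ≤ pqInt 1 t (n + k + 1) / pqInt 1 t (k + 1) :=
    le_of_lt (div_pos (pqInt_pos ht0 ht1 (n + k)) hI1)
  have hxr : x * (pqInt 1 t (n + k + 1) / pqInt 1 t (k + 1)) ≤ (1 + x) / 2 := by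
    have : x * (pqInt 1 t (n + k + 1) / pqInt 1 t (k + 1)) ≤ x * (1 + n * t ^ (k + 1)) :=
      mul_le_mul_of_nonneg_left hrat hx0
    nlinarith [pow_pos ht0 (k + 1)]
  rw [Real.norm_eq_abs, Real.norm_eq_abs,
    abs_of_nonneg (mul_nonneg (qBinom_pos ht0 ht1 _ _).le (pow_nonneg hx0 _)),
    abs_of_nonneg (mul_nonneg (qBinom_pos ht0 ht1 _ _).le (pow_nonneg hx0 _)), hfk1]
  calc pqBinom 1 t (n + k) k * x ^ k * (x * (pqInt 1 t (n + k + 1) / pqInt 1 t (k + 1)))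
      ≤ pqBinom 1 t (n + k) k * x ^ k * ((1 + x) / 2) :=
        mul_le_mul_of_nonneg_left hxr (mul_nonneg (qBinom_pos ht0 ht1 _ _).le hxk)
    _ = (1 + x) / 2 * (pqBinom 1 t (n + k) k * x ^ k) := by ring

lemma main_q_id : ∀ n : ℕ, ∀ x : ℝ, 0 ≤ x → x < 1 →
    (∏ s ∈ Finset.range (n + 1), (1 - t ^ s * x)) *
      ∑' k : ℕ, pqBinom 1 t (n + k) k * x ^ k = 1 := by
  intro n
  induction n with
  | zero =>
    intro x hx0 hx1
    have h1 : ∀ k : ℕ, pqBinom 1 t (0 + k) k * x ^ k = x ^ k := by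
      intro k
      rw [zero_add, qBinom_self ht0 ht1, one_mul]
    rw [tsum_congr h1, tsum_geometric_of_lt_one hx0 hx1, Finset.prod_range_one, pow_zero, one_mul,
      mul_inv_cancel₀ (sub_ne_zero.2 (ne_of_gt (by linarith)))]
  | succ n ih =>
    intro x hx0 hx1
    have htx0 : 0 ≤ t * x := mul_nonneg ht0.le hx0
    have htx1 : t * x < 1 := by nlinarith
    set a : ℕ → ℝ := fun k => pqBinom 1 t (n + 1 + k) k * x ^ k with ha_def
    set b : ℕ → ℝ := fun k => pqBinom 1 t (n + k) k * (t * x) ^ k with hb_def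
    have ha : Summable a := qBinom_summable ht0 ht1 (n + 1) hx0 hx1
    have hb : Summable b := qBinom_summable ht0 ht1 n htx0 htx1
    have ha' : Summable (fun k => a (k + 1)) := (summable_nat_add_iff 1).2 ha
    have hax : Summable (fun k => a k * x) := ha.mul_right x
    have hstep : ∀ k : ℕ, a (k + 1) - a k * x = b (k + 1) := by
      intro k
      show pqBinom 1 t (n + 1 + (k + 1)) (k + 1) * x ^ (k + 1)
          - pqBinom 1 t (n + 1 + k) k * x ^ k * x
          = pqBinom 1 t (n + (k + 1)) (k + 1) * (t * x) ^ (k + 1)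
      rw [show n + 1 + (k + 1) = n + k + 2 from by omega, qPascal ht0 ht1,
        show n + 1 + k = n + k + 1 from by omega, show n + (k + 1) = n + k + 1 from by omega]
      rw [mul_pow, pow_succ x]
      ring
    have key : (1 - x) * ∑' k, a k = ∑' k, b k := by
      have h0 : a 0 = 1 := by
        show pqBinom 1 t (n + 1 + 0) 0 * x ^ 0 = 1
        rw [qBinom_zero ht0 ht1, pow_zero, mul_one]
      have hb0 : b 0 = 1 := by
        show pqBinom 1 t (n + 0) 0 * (t * x) ^ 0 = 1
        rw [qBinom_zero ht0 ht1, pow_zero, mul_one]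
      calc (1 - x) * ∑' k, a k = ∑' k, a k - (∑' k, a k) * x := by ring
        _ = ∑' k, a k - ∑' k, (a k * x) := by rw [tsum_mul_right]
        _ = (a 0 + ∑' k, a (k + 1)) - ∑' k, (a k * x) := by rw [← Summable.tsum_eq_zero_add ha]
        _ = a 0 + (∑' k, a (k + 1) - ∑' k, (a k * x)) := by ring
        _ = a 0 + ∑' k, (a (k + 1) - a k * x) := by rw [Summable.tsum_sub ha' hax]
        _ = b 0 + ∑' k, b (k + 1) := by rw [h0, hb0, tsum_congr hstep]
        _ = ∑' k, b k := (Summable.tsum_eq_zero_add hb).symm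
    rw [Finset.prod_range_succ']
    have hprod : ∀ i ∈ Finset.range (n + 1), (1 - t ^ (i + 1) * x) = (1 - t ^ i * (t * x)) := by
      intro i _
      rw [pow_succ]
      ring
    rw [Finset.prod_congr rfl hprod, pow_zero, one_mul]
    calc (∏ i ∈ Finset.range (n + 1), (1 - t ^ i * (t * x))) * (1 - x) * ∑' k, a k
        = (∏ i ∈ Finset.range (n + 1), (1 - t ^ i * (t * x))) * ((1 - x) * ∑' k, a k) := by ring
      _ = (∏ i ∈ Finset.range (n + 1), (1 - t ^ i * (t * x))) * ∑' k, b k := by rw [key]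
      _ = 1 := ih (t * x) htx0 htx1

end q

section pq
variable {p q : ℝ} (hq : 0 < q) (hqp : q < p)

include hq hqp

lemma pqInt_scale (m : ℕ) : pqInt p q (m + 1) = p ^ m * pqInt 1 (q / p) (m + 1) := by
  have hp0 : (0:ℝ) < p := lt_trans hq hqp
  have hpq : p - q ≠ 0 := sub_ne_zero.2 (ne_of_gt hqp)
  have h1t : (1:ℝ) - q / p ≠ 0 := sub_ne_zero.2 (ne_of_lt ((div_lt_one hp0).2 hqp)).symm
  unfold pqInt
  rw [one_pow, div_pow]
  field_simp
  ring

lemma pqFact_scale (m : ℕ) :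
    pqFact p q m = p ^ (∑ j ∈ Finset.range m, j) * pqFact 1 (q / p) m := by
  induction m with
  | zero => simp [pqFact]
  | succ m ih =>
    rw [pqFact_succ, pqFact_succ, Finset.sum_range_succ, pow_add, ih, pqInt_scale hq hqp]
    ring

omit hq hqp in
lemma sum_range_id_add (n k : ℕ) :
    (∑ j ∈ Finset.range (n + k), j) =
      (∑ j ∈ Finset.range k, j) + (∑ j ∈ Finset.range n, j) + k * n := by
  induction k with
  | zero => simp
  | succ k ih =>
    rw [show n + (k + 1) = (n + k) + 1 from rfl, Finset.sum_range_succ, ih,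
      Finset.sum_range_succ]
    ring

lemma pqBinom_scale (n k : ℕ) :
    pqBinom p q (n + k) k = p ^ (k * n) * pqBinom 1 (q / p) (n + k) k := by
  have hp0 : (0:ℝ) < p := lt_trans hq hqp
  have ht0 : 0 < q / p := div_pos hq hp0
  have ht1 : q / p < 1 := (div_lt_one hp0).2 hqp
  unfold pqBinom
  rw [Nat.add_sub_cancel, pqFact_scale hq hqp (n + k), pqFact_scale hq hqp k,
    pqFact_scale hq hqp n, sum_range_id_add, pow_add, pow_add]
  have h1 := (pqFact_pos ht0 ht1 (n + k)).ne'
  have h2 := (pqFact_pos ht0 ht1 k).ne'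
  have h3 := (pqFact_pos ht0 ht1 n).ne'
  have h4 : (p : ℝ) ^ (∑ j ∈ Finset.range k, j) ≠ 0 := (pow_pos hp0 _).ne'
  have h5 : (p : ℝ) ^ (∑ j ∈ Finset.range n, j) ≠ 0 := (pow_pos hp0 _).ne'
  field_simp

lemma prod_scale (n : ℕ) (x : ℝ) :
    (∏ s ∈ Finset.range (n + 1), (p ^ s - q ^ s * x)) =
      p ^ (∑ s ∈ Finset.range (n + 1), s) *
        ∏ s ∈ Finset.range (n + 1), (1 - (q / p) ^ s * x) := by
  have hp0 : (0:ℝ) < p := lt_trans hq hqp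
  rw [← Finset.prod_pow_eq_pow_sum, ← Finset.prod_mul_distrib]
  apply Finset.prod_congr rfl
  intro s _
  rw [div_pow]
  field_simp

end pq


theorem mkz_one (p q : ℝ) (hq : 0 < q) (hqp : q < p) (hp : p ≤ 1)
    (n : ℕ) (x : ℝ) (hx : x ∈ Set.Ico (0 : ℝ) 1) :
    mkz p q n (fun _ => 1) x = 1 := by
  obtain ⟨hx0, hx1⟩ := hx
  have hp0 : (0:ℝ) < p := lt_trans hq hqp
  have ht0 : 0 < q / p := div_pos hq hp0
  have ht1 : q / p < 1 := (div_lt_one hp0).2 hqp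
  unfold mkz
  rw [if_neg (ne_of_lt hx1)]
  have hT : n * (n + 1) / 2 = ∑ j ∈ Finset.range (n + 1), j := by
    rw [Finset.sum_range_id, Nat.add_sub_cancel, Nat.mul_comm]
  rw [hT]
  set S := ∑ j ∈ Finset.range (n + 1), j with hS
  have hterm : ∀ k : ℕ,
      pqBinom p q (n + k) k * x ^ k * (p ^ (k * n))⁻¹ *
        (∏ s ∈ Finset.range (n + 1), (p ^ s - q ^ s * x)) * (fun _ : ℝ => (1:ℝ))
          (p ^ n * pqInt p q k / pqInt p q (n + k)) =
      pqBinom 1 (q / p) (n + k) k * x ^ k *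
        (p ^ S * ∏ s ∈ Finset.range (n + 1), (1 - (q / p) ^ s * x)) := by
    intro k
    have hpk : (p : ℝ) ^ (k * n) ≠ 0 := (pow_pos hp0 _).ne'
    simp only
    rw [pqBinom_scale hq hqp, prod_scale hq hqp, ← hS, mul_one]
    field_simp
    ring
  rw [tsum_congr hterm, tsum_mul_right]
  have hm := main_q_id ht0 ht1 n x hx0 hx1
  have hne : (p : ℝ) ^ S ≠ 0 := (pow_pos hp0 _).ne'
  calc (p ^ S)⁻¹ * ((∑' k : ℕ, pqBinom 1 (q / p) (n + k) k * x ^ k) *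
          (p ^ S * ∏ s ∈ Finset.range (n + 1), (1 - (q / p) ^ s * x)))
      = ((p ^ S)⁻¹ * p ^ S) *
          ((∏ s ∈ Finset.range (n + 1), (1 - (q / p) ^ s * x)) *
            ∑' k : ℕ, pqBinom 1 (q / p) (n + k) k * x ^ k) := by ring
    _ = 1 := by rw [inv_mul_cancel₀ hne, one_mul, hm]
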